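/- Let q ≥ 2 be an integer and let P and Q be probability vectors on Fin q with equal Shannon entropies, H(P) = H(Q). Suppose the (q - 1) least likely outcomes of P are equally likely, i.e. there is an index i* with P i* = max i, P i and P j = (1 - max i, P i) / (q - 1) for j ≠ i*. Then max i, P i ≥ max i, Q i, with strict inequality if the (q - 1) least likely outcomes of Q are not all equally likely. -/

import Mathlib

open Real Finset

/-- The maximum entry of a vector on `Fin q`, `q > 0`. -/
noncomputable def vmax (q : ℕ) (hq : 0 < q) (p : Fin q → ℝ) : ℝ :=
  Finset.univ.sup' ⟨⟨0, hq⟩, Finset.mem_univ _⟩ p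

private noncomputable def gg (x : ℝ) : ℝ := x * Real.log x
private noncomputable def ff (c m : ℝ) : ℝ := -(gg m) - gg (1 - m) + (1 - m) * c

private lemma gibbs_term {x t : ℝ} (hx : 0 ≤ x) (ht : 0 < t) :
    x * Real.log t + x - t ≤ gg x ∧ (x ≠ t → x * Real.log t + x - t < gg x) := by
  rcases eq_or_lt_of_le hx with h0 | h0
  · constructor
    · simp [gg, ← h0]; linarith
    · intro _; simp [gg, ← h0]; linarith
  · constructor
    · have h := Real.log_le_sub_one_of_pos (x := t / x) (by positivity)
      rw [Real.log_div (ne_of_gt ht) (ne_of_gt h0)] at h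
      have h2 := mul_le_mul_of_nonneg_left h (le_of_lt h0)
      rw [mul_sub] at h2
      have hx' : x * (t / x - 1) = t - x := by field_simp
      unfold gg; nlinarith [h2]
    · intro hne
      have hne' : t / x ≠ 1 := by
        intro h; apply hne; field_simp at h; linarith
      have h := Real.log_lt_sub_one_of_pos (x := t / x) (by positivity) hne'
      rw [Real.log_div (ne_of_gt ht) (ne_of_gt h0)] at h
      have h2 := mul_lt_mul_of_pos_left h h0
      rw [mul_sub] at h2
      have hx' : x * (t / x - 1) = t - x := by field_simp
      unfold gg; nlinarith [h2]

private lemma cast_q {q : ℕ} (hq : 2 ≤ q) : ((q - 1 : ℕ) : ℝ) = (q : ℝ) - 1 := by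
  have : 1 ≤ q := by omega
  push_cast [Nat.cast_sub this]; ring

/-- Entropy sum for a flat-tailed distribution. -/
private lemma flat_sum {q : ℕ} (hq : 2 ≤ q) (P : Fin q → ℝ) (istar : Fin q) (M : ℝ)
    (hm : P istar = M)
    (hflat : ∀ j, j ≠ istar → P j = (1 - M) / ((q : ℝ) - 1)) :
    ∑ i, gg (P i) = gg M + gg (1 - M) - (1 - M) * Real.log ((q : ℝ) - 1) := by
  have hq1 : (1 : ℝ) ≤ (q : ℝ) - 1 := by
    have : (2 : ℝ) ≤ (q : ℝ) := by exact_mod_cast hq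
    linarith
  have hqne : (q : ℝ) - 1 ≠ 0 := by linarith
  set t : ℝ := (1 - M) / ((q : ℝ) - 1) with hts
  have hsplit := Finset.sum_erase_add Finset.univ (fun i => gg (P i)) (Finset.mem_univ istar)
  have hconst : ∑ j ∈ Finset.univ.erase istar, gg (P j)
      = ((q : ℝ) - 1) * gg t := by
    rw [Finset.sum_congr rfl (fun j hj => by
      rw [hflat j (Finset.ne_of_mem_erase hj)])]
    rw [Finset.sum_const, Finset.card_erase_of_mem (Finset.mem_univ istar)]
    simp [Finset.card_univ, cast_q hq, nsmul_eq_mul]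
  have htM : ((q : ℝ) - 1) * t = 1 - M := by rw [hts]; field_simp
  rcases eq_or_ne M 1 with h1 | h1
  · rw [← hsplit, hconst]
    simp only [hm]
    have ht0 : t = 0 := by rw [hts, h1]; simp
    rw [ht0, h1]
    simp [gg]
  · have hlog : Real.log t = Real.log (1 - M) - Real.log ((q : ℝ) - 1) := by
      rw [hts, Real.log_div (by intro h; apply h1; linarith) hqne]
    have hkey : ((q : ℝ) - 1) * gg t = gg (1 - M) - (1 - M) * Real.log ((q : ℝ) - 1) := by
      unfold gg
      rw [hlog]
      linear_combination (Real.log (1 - M) - Real.log ((q : ℝ) - 1)) * htM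
    rw [← hsplit, hconst]
    simp only [hm]
    rw [hkey]; ring

/-- Gibbs / Jensen bound for the entropy sum in terms of any attained value. -/
private lemma gibbs_sum {q : ℕ} (hq : 2 ≤ q) (Q : Fin q → ℝ)
    (hQ0 : ∀ i, 0 ≤ Q i) (hQ1 : ∑ i, Q i = 1) (i0 : Fin q) (N : ℝ)
    (hN : Q i0 = N) :
    gg N + gg (1 - N) - (1 - N) * Real.log ((q : ℝ) - 1) ≤ ∑ i, gg (Q i) ∧
    ((∃ j, j ≠ i0 ∧ Q j ≠ (1 - N) / ((q : ℝ) - 1)) →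
      gg N + gg (1 - N) - (1 - N) * Real.log ((q : ℝ) - 1) < ∑ i, gg (Q i)) := by
  have hq1 : (1 : ℝ) ≤ (q : ℝ) - 1 := by
    have : (2 : ℝ) ≤ (q : ℝ) := by exact_mod_cast hq
    linarith
  have hqne : (q : ℝ) - 1 ≠ 0 := by linarith
  set t : ℝ := (1 - N) / ((q : ℝ) - 1) with hts
  set s : Finset (Fin q) := Finset.univ.erase i0 with hs
  have hsplit := Finset.sum_erase_add Finset.univ (fun i => gg (Q i)) (Finset.mem_univ i0)
  have hsplitQ := Finset.sum_erase_add Finset.univ Q (Finset.mem_univ i0)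
  have hS : ∑ j ∈ s, Q j = 1 - N := by
    rw [hQ1] at hsplitQ; rw [hs]; rw [hN] at hsplitQ; linarith
  have hcard : ((s.card : ℕ) : ℝ) = (q : ℝ) - 1 := by
    rw [hs, Finset.card_erase_of_mem (Finset.mem_univ i0)]
    simp only [Finset.card_univ, Fintype.card_fin]
    exact cast_q hq
  have htM : ((q : ℝ) - 1) * t = 1 - N := by rw [hts]; field_simp
  have hN1 : 0 ≤ 1 - N := by
    rw [← hS]; exact Finset.sum_nonneg (fun j _ => hQ0 j)
  rcases eq_or_lt_of_le hN1 with h1 | h1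
  · -- N = 1 : tail is all zero
    have hzero : ∀ j ∈ s, Q j = 0 := by
      intro j hj
      have := (Finset.sum_eq_zero_iff_of_nonneg (fun j _ => hQ0 j)).mp
        (by rw [hS, ← h1]) j hj
      exact this
    have ht0 : t = 0 := by rw [hts, ← h1]; simp
    have hsum : ∑ i, gg (Q i) = gg N := by
      rw [← hsplit]
      simp only [hN]
      rw [Finset.sum_eq_zero (fun j hj => by rw [hzero j hj]; simp [gg])]
      ring
    constructor
    · rw [hsum, ← h1]; simp [gg]
    · rintro ⟨j, hj, hne⟩
      exact absurd (by rw [hzero j (Finset.mem_erase.mpr ⟨hj, Finset.mem_univ j⟩), hts, ← h1]; simp)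
        hne
  · -- N < 1
    have ht : 0 < t := by rw [hts]; positivity
    have hlog : Real.log t = Real.log (1 - N) - Real.log ((q : ℝ) - 1) := by
      rw [hts, Real.log_div (ne_of_gt h1) hqne]
    have hsum_eval : ∑ j ∈ s, (Q j * Real.log t + Q j - t) = (1 - N) * Real.log t := by
      rw [Finset.sum_sub_distrib, Finset.sum_add_distrib, ← Finset.sum_mul, hS,
        Finset.sum_const, nsmul_eq_mul, hcard]
      linarith [htM]
    have hval : (1 - N) * Real.log t = gg (1 - N) - (1 - N) * Real.log ((q : ℝ) - 1) := by
      unfold gg; rw [hlog]; ring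
    constructor
    · have hle : ∑ j ∈ s, (Q j * Real.log t + Q j - t) ≤ ∑ j ∈ s, gg (Q j) :=
        Finset.sum_le_sum (fun j _ => (gibbs_term (hQ0 j) ht).1)
      rw [hsum_eval, hval] at hle
      rw [← hsplit]
      simp only [hN]
      linarith
    · rintro ⟨j, hj, hne⟩
      have hjm : j ∈ s := Finset.mem_erase.mpr ⟨hj, Finset.mem_univ j⟩
      have hlt : ∑ j ∈ s, (Q j * Real.log t + Q j - t) < ∑ j ∈ s, gg (Q j) :=
        Finset.sum_lt_sum (fun j _ => (gibbs_term (hQ0 j) ht).1)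
          ⟨j, hjm, (gibbs_term (hQ0 j) ht).2 hne⟩
      rw [hsum_eval, hval] at hlt
      rw [← hsplit]
      simp only [hN]
      linarith
private lemma ff_strictAntiOn {q : ℕ} (hq : 2 ≤ q) :
    StrictAntiOn (ff (Real.log ((q : ℝ) - 1))) (Set.Icc ((q : ℝ)⁻¹) 1) := by
  have hq1 : (1 : ℝ) ≤ (q : ℝ) - 1 := by
    have : (2 : ℝ) ≤ (q : ℝ) := by exact_mod_cast hq
    linarith
  apply strictAntiOn_of_deriv_neg (convex_Icc _ _)
  · apply ContinuousOn.add
    · exact (Real.continuous_mul_log.neg.sub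
        (Real.continuous_mul_log.comp (continuous_const.sub continuous_id))).continuousOn
    · exact ((continuous_const.sub continuous_id).mul continuous_const).continuousOn
  · intro x hx
    rw [interior_Icc] at hx
    obtain ⟨hx1, hx2⟩ := hx
    have hq0 : (0 : ℝ) < (q : ℝ)⁻¹ := by positivity
    have hx0 : 0 < x := lt_trans hq0 hx1
    have h1x : 0 < 1 - x := by linarith
    have hd : HasDerivAt (ff (Real.log ((q : ℝ) - 1)))
        (Real.log (1 - x) - Real.log x - Real.log ((q : ℝ) - 1)) x := by
      have d1 : HasDerivAt gg (Real.log x + 1) x := Real.hasDerivAt_mul_log (ne_of_gt hx0)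
      have dsub : HasDerivAt (fun m : ℝ => 1 - m) (-1) x := by
        simpa using (hasDerivAt_id x).const_sub 1
      have d2 : HasDerivAt (fun m : ℝ => gg (1 - m)) (-(Real.log (1 - x) + 1)) x := by
        have := (Real.hasDerivAt_mul_log (ne_of_gt h1x)).comp x dsub
        simpa [gg, mul_comm, Function.comp_def] using this
      have d3 : HasDerivAt (fun m : ℝ => (1 - m) * Real.log ((q : ℝ) - 1))
          (-Real.log ((q : ℝ) - 1)) x := by
        simpa using dsub.mul_const (Real.log ((q : ℝ) - 1))
      have := (d1.neg.sub d2).add d3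
      exact this.congr_deriv (by ring)
    rw [hd.deriv]
    have key : 1 - x < x * ((q : ℝ) - 1) := by
      have hqpos : (0 : ℝ) < q := by positivity
      have : (q : ℝ)⁻¹ * q = 1 := inv_mul_cancel₀ (ne_of_gt hqpos)
      nlinarith [mul_lt_mul_of_pos_right hx1 hqpos]
    have : Real.log (1 - x) < Real.log (x * ((q : ℝ) - 1)) :=
      Real.log_lt_log h1x key
    rw [Real.log_mul (ne_of_gt hx0) (by linarith)] at this
    linarith

private lemma main_aux {q : ℕ} (hq : 2 ≤ q) (P Q : Fin q → ℝ)
    (hP0 : ∀ i, 0 ≤ P i) (hP1 : ∑ i, P i = 1)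
    (hQ0 : ∀ i, 0 ≤ Q i) (hQ1 : ∑ i, Q i = 1)
    (hent : -∑ i, P i * Real.log (P i) = -∑ i, Q i * Real.log (Q i))
    (M N : ℝ)
    (hMle : ∀ i, P i ≤ M) (hNle : ∀ i, Q i ≤ N) (hNmem : ∃ i, Q i = N)
    (hPflat : ∃ istar : Fin q, P istar = M ∧
      ∀ j, j ≠ istar → P j = (1 - M) / ((q : ℝ) - 1)) :
    N ≤ M ∧
    (¬(∃ istar : Fin q, Q istar = N ∧
        ∀ j, j ≠ istar → Q j = (1 - N) / ((q : ℝ) - 1)) → N < M) := by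
  have hq0 : (0 : ℝ) < q := by positivity
  set c : ℝ := Real.log ((q : ℝ) - 1) with hc
  obtain ⟨istar, him, hflat⟩ := hPflat
  obtain ⟨i0, hi0⟩ := hNmem
  -- bounds on M and N
  have hM1 : M ≤ 1 := by
    rw [← him, ← hP1]
    exact Finset.single_le_sum (fun i _ => hP0 i) (Finset.mem_univ istar)
  have hN1 : N ≤ 1 := by
    rw [← hi0, ← hQ1]
    exact Finset.single_le_sum (fun i _ => hQ0 i) (Finset.mem_univ i0)
  have hMq : (q : ℝ)⁻¹ ≤ M := by
    have h := Finset.sum_le_sum (fun i (_ : i ∈ Finset.univ) => hMle i)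
    rw [hP1, Finset.sum_const, Finset.card_univ, Fintype.card_fin, nsmul_eq_mul] at h
    rw [inv_eq_one_div, div_le_iff₀ hq0]
    nlinarith
  have hNq : (q : ℝ)⁻¹ ≤ N := by
    have h := Finset.sum_le_sum (fun i (_ : i ∈ Finset.univ) => hNle i)
    rw [hQ1, Finset.sum_const, Finset.card_univ, Fintype.card_fin, nsmul_eq_mul] at h
    rw [inv_eq_one_div, div_le_iff₀ hq0]
    nlinarith
  have hMm : M ∈ Set.Icc ((q : ℝ)⁻¹) 1 := Set.mem_Icc.mpr ⟨hMq, hM1⟩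
  have hNm : N ∈ Set.Icc ((q : ℝ)⁻¹) 1 := Set.mem_Icc.mpr ⟨hNq, hN1⟩
  -- entropy of P equals ff c M
  have hggP : ∑ i, P i * Real.log (P i) = ∑ i, gg (P i) := rfl
  have hggQ : ∑ i, Q i * Real.log (Q i) = ∑ i, gg (Q i) := rfl
  have hHP : -∑ i, P i * Real.log (P i) = ff c M := by
    rw [hggP, flat_sum hq P istar M him hflat]
    unfold ff; ring
  have gibbs := gibbs_sum hq Q hQ0 hQ1 i0 N hi0
  have hQle : -∑ i, Q i * Real.log (Q i) ≤ ff c N := by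
    have h := gibbs.1
    rw [hggQ]; unfold ff; linarith
  have hanti := ff_strictAntiOn hq
  have hff : ff c M ≤ ff c N := by rw [← hHP, hent]; exact hQle
  constructor
  · by_contra h
    push_neg at h
    have := hanti hMm hNm h
    rw [hc] at hff
    linarith
  · intro hnot
    have hex : ∃ j, j ≠ i0 ∧ Q j ≠ (1 - N) / ((q : ℝ) - 1) := by
      by_contra hcon
      push_neg at hcon
      exact hnot ⟨i0, hi0, fun j hj => hcon j hj⟩
    have hstrict : -∑ i, Q i * Real.log (Q i) < ff c N := by
      have h := gibbs.2 hex
      rw [hggQ]; unfold ff; linarith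
    have hfflt : ff c M < ff c N := by rw [← hHP, hent]; exact hstrict
    rcases lt_trichotomy N M with h | h | h
    · exact h
    · rw [h] at hfflt; exact absurd hfflt (lt_irrefl _)
    · have := hanti hMm hNm h
      rw [hc] at hfflt
      linarith

/-- Let `P`, `Q` be probability vectors on `Fin q` (`q ≥ 2`) with
equal Shannon entropies. If the `q - 1` least likely outcomes of `P` are
equally likely, then `max P ≥ max Q`, strictly so if the `q - 1` least likely
outcomes of `Q` are not all equally likely. -/
theorem stmt_6 (q : ℕ) (hq : 2 ≤ q) (P Q : Fin q → ℝ)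
    (hP0 : ∀ i, 0 ≤ P i) (hP1 : ∑ i, P i = 1)
    (hQ0 : ∀ i, 0 ≤ Q i) (hQ1 : ∑ i, Q i = 1)
    (hent : -∑ i, P i * Real.log (P i) = -∑ i, Q i * Real.log (Q i))
    (hPflat : ∃ istar : Fin q, P istar = vmax q (by omega) P ∧
      ∀ j, j ≠ istar → P j = (1 - vmax q (by omega) P) / ((q : ℝ) - 1)) :
    vmax q (by omega) Q ≤ vmax q (by omega) P ∧
    (¬(∃ istar : Fin q, Q istar = vmax q (by omega) Q ∧
        ∀ j, j ≠ istar → Q j = (1 - vmax q (by omega) Q) / ((q : ℝ) - 1)) →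
      vmax q (by omega) Q < vmax q (by omega) P) := by
  have hq0 : 0 < q := by omega
  have hMle : ∀ i, P i ≤ vmax q hq0 P := fun i => Finset.le_sup' P (Finset.mem_univ i)
  have hNle : ∀ i, Q i ≤ vmax q hq0 Q := fun i => Finset.le_sup' Q (Finset.mem_univ i)
  have hNmem : ∃ i, Q i = vmax q hq0 Q := by
    obtain ⟨i, _, hi⟩ := Finset.exists_mem_eq_sup'
      (⟨⟨0, hq0⟩, Finset.mem_univ _⟩ : (Finset.univ : Finset (Fin q)).Nonempty) Q
    exact ⟨i, hi.symm⟩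
  exact main_aux hq P Q hP0 hP1 hQ0 hQ1 hent (vmax q hq0 P) (vmax q hq0 Q)
    hMle hNle hNmem hPflat
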